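/- For any Lévy process X with independent increments and any ε > 0, x > 0: P(−I_1 > (1−ε)x) ≥ P(−X_1 > −εx) · P(M_1^- > x), where I_1 = inf_{0≤u≤1} X_u and M_1^- = sup_{0≤u≤v≤1}(X_u − X_v), assuming additionally that X is α-stable (hence P(−X_{1−t} > −εx) ≥ P(−X_1 > −εx) for t ∈ (0,1) by self-similarity). -/

import Mathlib

open MeasureTheory ProbabilityTheory Set Filter

/-- A (real-valued) Lévy process: measurable, starts at zero, càdlàg paths,
stationary increments, independent increments. -/
structure IsLevyProcess {Ω : Type*} [MeasurableSpace Ω] (P : Measure Ω)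
    (X : ℝ → Ω → ℝ) : Prop where
  meas : ∀ t : ℝ, Measurable (X t)
  zero : ∀ ω, X 0 ω = 0
  rightCont : ∀ ω, ∀ t : ℝ, ContinuousWithinAt (fun s => X s ω) (Set.Ici t) t
  leftLimits : ∀ ω, ∀ t : ℝ, 0 < t →
    ∃ l : ℝ, Filter.Tendsto (fun s => X s ω) (nhdsWithin t (Set.Iio t)) (nhds l)
  stationary : ∀ s t : ℝ, 0 ≤ s → 0 ≤ t →
    P.map (fun ω => X (s + t) ω - X s ω) = P.map (X t)
  indep : ∀ n : ℕ, ∀ τ : Fin (n + 1) → ℝ, Monotone τ →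
    iIndepFun
      (fun i : Fin n => fun ω => X (τ i.succ) ω - X (τ i.castSucc) ω) P

/-- Self-similarity with index `α`: `(X_{bt})_t` has the same law as `(b^{1/α} X_t)_t`. -/
def SelfSimilar {Ω : Type*} [MeasurableSpace Ω] (P : Measure Ω)
    (X : ℝ → Ω → ℝ) (α : ℝ) : Prop :=
  ∀ b : ℝ, 0 < b →
    P.map (fun ω => fun t : ℝ => X (b * t) ω)
      = P.map (fun ω => fun t : ℝ => b ^ (1 / α) * X t ω)

namespace NegInfTailAux

/-- partial sum of the first `j` coordinates of `d : Fin N → ℝ`. -/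
def psum (N j : ℕ) (d : Fin N → ℝ) : ℝ :=
  ∑ i ∈ Finset.range j, if h : i < N then d ⟨i, h⟩ else 0

lemma measurable_psum (N j : ℕ) : Measurable (psum N j) := by
  apply Finset.measurable_sum
  intro i _
  by_cases h : i < N
  · simpa [h] using measurable_pi_apply (⟨i, h⟩ : Fin N)
  · simp [h]

lemma psum_split (N j : ℕ) (hj : j ≤ N) (d : Fin N → ℝ) :
    psum N N d = psum N j d + ∑ i ∈ Finset.Ico j N, (if h : i < N then d ⟨i, h⟩ else 0) := by
  rw [psum, psum, Finset.range_eq_Ico, Finset.range_eq_Ico]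
  exact (Finset.sum_Ico_consecutive (fun i => if h : i < N then d ⟨i, h⟩ else 0) (Nat.zero_le j) hj).symm

/-- reversal of coordinates -/
def rev (N : ℕ) (d : Fin N → ℝ) : Fin N → ℝ := fun i => d i.rev

lemma measurable_rev (N : ℕ) : Measurable (rev N) :=
  measurable_pi_lambda _ fun i => measurable_pi_apply _

lemma psum_rev (N j : ℕ) (hj : j ≤ N) (d : Fin N → ℝ) :
    psum N j (rev N d) = psum N N d - psum N (N - j) d := by
  rw [psum_split N (N - j) (Nat.sub_le _ _) d]
  have h1 : ∑ i ∈ Finset.Ico (N - j) N, (if h : i < N then d ⟨i, h⟩ else 0)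
      = ∑ i ∈ Finset.range j, (if h : (N - j) + i < N then d ⟨(N - j) + i, h⟩ else 0) := by
    rw [Finset.sum_Ico_eq_sum_range]
    have h : N - (N - j) = j := by omega
    rw [h]
  have h2 : psum N j (rev N d)
      = ∑ i ∈ Finset.range j, (if h : (N - j) + i < N then d ⟨(N - j) + i, h⟩ else 0) := by
    rw [← Finset.sum_range_reflect (fun i => if h : (N - j) + i < N then d ⟨(N - j) + i, h⟩ else 0) j]
    unfold psum rev
    apply Finset.sum_congr rfl
    intro i hi
    have hij : i < j := Finset.mem_range.mp hi
    have hiN : i < N := lt_of_lt_of_le hij hj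
    have hN1 : N - j + (j - 1 - i) < N := by omega
    rw [dif_pos hiN, dif_pos hN1]
    congr 1
    apply Fin.ext
    simp [Fin.val_rev]
    omega
  rw [h2, h1]
  ring

end NegInfTailAux

namespace NegInfTailAux

variable {Ω : Type*} [MeasureSpace Ω] [IsProbabilityMeasure (ℙ : Measure Ω)]

/-- vector of increments over the grid `k/N`. -/
noncomputable def Vmap (X : ℝ → Ω → ℝ) (N : ℕ) (ω : Ω) : Fin N → ℝ :=
  fun i => X ((((i : ℕ) + 1 : ℕ) : ℝ) / (N : ℝ)) ω - X (((i : ℕ) : ℝ) / (N : ℝ)) ω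

lemma measurable_Vmap {X : ℝ → Ω → ℝ} (hX : IsLevyProcess ℙ X) (N : ℕ) :
    Measurable (Vmap X N) :=
  measurable_pi_lambda _ fun _ => (hX.meas _).sub (hX.meas _)

lemma psum_Vmap {X : ℝ → Ω → ℝ} (hX : IsLevyProcess ℙ X) (N : ℕ) :
    ∀ j : ℕ, j ≤ N → ∀ ω, psum N j (Vmap X N ω) = X ((j : ℝ) / (N : ℝ)) ω := by
  intro j
  induction j with
  | zero =>
    intro _ ω
    simp [psum, hX.zero ω]
  | succ j ih =>
    intro hj ω
    have hjN : j < N := hj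
    rw [psum, Finset.sum_range_succ, ← psum, ih (le_of_lt hjN) ω, dif_pos hjN]
    show X ((j:ℝ)/N) ω + (X (((j + 1 : ℕ) : ℝ)/N) ω - X (((j:ℕ):ℝ)/N) ω) = _
    rw [add_sub_cancel]

lemma indep_Vmap {X : ℝ → Ω → ℝ} (hX : IsLevyProcess ℙ X) (N : ℕ) :
    iIndepFun (fun (i : Fin N) => fun ω => Vmap X N ω i) ℙ := by
  have hτ : Monotone (fun i : Fin (N + 1) => ((i : ℕ) : ℝ) / (N : ℝ)) := by
    intro a b hab
    rcases Nat.eq_zero_or_pos N with h0 | h0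
    · simp [h0]
    · have hN : (0:ℝ) < (N:ℝ) := by exact_mod_cast h0
      have hab' : ((a : ℕ) : ℝ) ≤ ((b : ℕ) : ℝ) := by exact_mod_cast hab
      exact div_le_div_of_nonneg_right hab' hN.le
  have h := hX.indep N (fun i : Fin (N + 1) => ((i : ℕ) : ℝ) / (N : ℝ)) hτ
  convert h using 1
  exact funext fun i => funext fun ω => rfl

lemma map_incr {X : ℝ → Ω → ℝ} (hX : IsLevyProcess ℙ X) (N : ℕ) (i : Fin N) :
    Measure.map (fun ω => Vmap X N ω i) (ℙ : Measure Ω)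
      = Measure.map (X ((1 : ℝ) / (N : ℝ))) ℙ := by
  have h := hX.stationary (((i : ℕ) : ℝ) / (N : ℝ)) ((1 : ℝ) / (N : ℝ))
    (by positivity) (by positivity)
  rw [← h]
  congr 1
  funext ω
  simp only [Vmap]
  congr 2
  push_cast
  ring

lemma map_Vmap {X : ℝ → Ω → ℝ} (hX : IsLevyProcess ℙ X) (N : ℕ) :
    Measure.map (Vmap X N) (ℙ : Measure Ω)
      = Measure.pi (fun _ : Fin N => Measure.map (X ((1 : ℝ) / (N : ℝ))) ℙ) := by
  haveI : IsProbabilityMeasure (Measure.map (X ((1 : ℝ) / (N : ℝ))) (ℙ : Measure Ω)) :=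
    Measure.isProbabilityMeasure_map (hX.meas _).aemeasurable
  refine (Measure.pi_eq fun s hs => ?_).symm
  rw [Measure.map_apply (measurable_Vmap hX N) (MeasurableSet.univ_pi hs)]
  have hpre : Vmap X N ⁻¹' (Set.univ.pi s)
      = ⋂ i ∈ (Finset.univ : Finset (Fin N)), (fun ω => Vmap X N ω i) ⁻¹' (s i) := by
    ext ω
    simp [Set.mem_pi]
  rw [hpre, (indep_Vmap hX N).measure_inter_preimage_eq_mul Finset.univ (fun i _ => hs i)]
  apply Finset.prod_congr rfl
  intro i _
  rw [← Measure.map_apply (by exact (hX.meas _).sub (hX.meas _) : Measurable fun ω => Vmap X N ω i) (hs i),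
    map_incr hX N i]

lemma rev_invariant {X : ℝ → Ω → ℝ} (hX : IsLevyProcess ℙ X) (N : ℕ)
    {S : Set (Fin N → ℝ)} (hS : MeasurableSet S) :
    ℙ (Vmap X N ⁻¹' (rev N ⁻¹' S)) = ℙ (Vmap X N ⁻¹' S) := by
  haveI : IsProbabilityMeasure (Measure.map (X ((1 : ℝ) / (N : ℝ))) (ℙ : Measure Ω)) :=
    Measure.isProbabilityMeasure_map (hX.meas _).aemeasurable
  have hrevS : MeasurableSet (rev N ⁻¹' S) := measurable_rev N hS
  rw [← Measure.map_apply (measurable_Vmap hX N) hrevS,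
    ← Measure.map_apply (measurable_Vmap hX N) hS, map_Vmap hX N]
  set μ : Measure ℝ := Measure.map (X ((1 : ℝ) / (N : ℝ))) ℙ with hμ
  have hmp := MeasureTheory.measurePreserving_piCongrLeft (fun _ : Fin N => μ)
    (Fin.revPerm (n := N))
  have hcoe : ⇑(MeasurableEquiv.piCongrLeft (fun _ : Fin N => ℝ) Fin.revPerm) = rev N := by
    funext d i
    conv_lhs => rw [show i = Fin.revPerm (i.rev) by simp]
    rw [MeasurableEquiv.coe_piCongrLeft, Equiv.piCongrLeft_apply_apply]
    simp [rev]
  have hpre := hmp.measure_preimage (μa := Measure.pi fun _ : Fin N => μ)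
    hS.nullMeasurableSet
  rw [hcoe] at hpre
  exact hpre

end NegInfTailAux

namespace NegInfTailAux

variable {Ω : Type*} [MeasureSpace Ω] [IsProbabilityMeasure (ℙ : Measure Ω)]

/-- grid drawdown event at endpoint `j` -/
def Pp (X : ℝ → Ω → ℝ) (x : ℝ) (N j : ℕ) : Set Ω :=
  {ω | ∃ i ≤ j, x < X ((i : ℝ) / (N : ℝ)) ω - X ((j : ℝ) / (N : ℝ)) ω}

/-- first passage at `j` -/
def Bset (X : ℝ → Ω → ℝ) (x : ℝ) (N j : ℕ) : Set Ω :=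
  Pp X x N j ∩ ⋂ j' ∈ Finset.range j, (Pp X x N j')ᶜ

def Gset (X : ℝ → Ω → ℝ) (ε x : ℝ) (N j : ℕ) : Set Ω :=
  {ω | X ((N : ℝ) / (N : ℝ)) ω - X ((j : ℝ) / (N : ℝ)) ω < ε * x}

lemma measurable_Pp {X : ℝ → Ω → ℝ} (hX : IsLevyProcess ℙ X) (x : ℝ) (N j : ℕ) :
    MeasurableSet (Pp X x N j) := by
  unfold Pp
  rw [Set.setOf_exists]
  refine MeasurableSet.iUnion fun i => ?_
  by_cases hij : i ≤ j
  · simp only [hij, true_and, exists_prop]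
    exact measurableSet_lt measurable_const ((hX.meas _).sub (hX.meas _))
  · simp [hij]

lemma measurable_Bset {X : ℝ → Ω → ℝ} (hX : IsLevyProcess ℙ X) (x : ℝ) (N j : ℕ) :
    MeasurableSet (Bset X x N j) :=
  (measurable_Pp hX x N j).inter
    (MeasurableSet.biInter (Set.to_countable _) fun j' _ => (measurable_Pp hX x N j').compl)

lemma measurable_Gset {X : ℝ → Ω → ℝ} (hX : IsLevyProcess ℙ X) (ε x : ℝ) (N j : ℕ) :
    MeasurableSet (Gset X ε x N j) :=
  measurableSet_lt ((hX.meas _).sub (hX.meas _)) measurable_const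

lemma psum_congr_head (N m : ℕ) (d d' : Fin N → ℝ)
    (h : ∀ i : Fin N, (i : ℕ) < m → d i = d' i) : psum N m d = psum N m d' := by
  refine Finset.sum_congr rfl fun i hi => ?_
  have him : i < m := Finset.mem_range.mp hi
  by_cases hiN : i < N
  · rw [dif_pos hiN, dif_pos hiN, h ⟨i, hiN⟩ him]
  · rw [dif_neg hiN, dif_neg hiN]

lemma psum_congr_tail (N j : ℕ) (hj : j ≤ N) (d d' : Fin N → ℝ)
    (h : ∀ i : Fin N, j ≤ (i : ℕ) → d i = d' i) :
    psum N N d - psum N j d = psum N N d' - psum N j d' := by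
  rw [psum_split N j hj d, psum_split N j hj d']
  have : ∑ i ∈ Finset.Ico j N, (if h : i < N then d ⟨i, h⟩ else 0)
      = ∑ i ∈ Finset.Ico j N, (if h : i < N then d' ⟨i, h⟩ else 0) := by
    refine Finset.sum_congr rfl fun i hi => ?_
    obtain ⟨h1, h2⟩ := Finset.mem_Ico.mp hi
    rw [dif_pos h2, dif_pos h2, h ⟨i, h2⟩ h1]
  rw [this]
  ring

lemma measurable_Qex (N m : ℕ) (x : ℝ) :
    MeasurableSet {d : Fin N → ℝ | ∃ i ≤ m, x < psum N i d - psum N m d} := by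
  rw [Set.setOf_exists]
  refine MeasurableSet.iUnion fun i => ?_
  by_cases him : i ≤ m
  · simp only [him, true_and, exists_prop]
    exact measurableSet_lt measurable_const ((measurable_psum N i).sub (measurable_psum N m))
  · simp [him]

/-- the key independence step -/
lemma keyIndep {X : ℝ → Ω → ℝ} (hX : IsLevyProcess ℙ X) (ε x : ℝ) (N : ℕ)
    (j : ℕ) (hj : j ≤ N) :
    ℙ (Bset X x N j ∩ Gset X ε x N j) = ℙ (Bset X x N j) * ℙ (Gset X ε x N j) := by
  classical
  set Sf : Finset (Fin N) := Finset.univ.filter (fun i => (i : ℕ) < j) with hSf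
  set Tf : Finset (Fin N) := Sfᶜ with hTf
  have hmemS : ∀ i : Fin N, i ∈ Sf ↔ (i : ℕ) < j := by
    intro i; simp [hSf]
  have hmemT : ∀ i : Fin N, i ∈ Tf ↔ j ≤ (i : ℕ) := by
    intro i; simp [hTf, hSf, Finset.mem_compl, not_lt]
  have hdisj : Disjoint Sf Tf := disjoint_compl_right
  have hIF := (indep_Vmap hX N).indepFun_finset Sf Tf hdisj
    (fun i => (hX.meas _).sub (hX.meas _))
  -- extensions by zero
  set extS : ((i : Sf) → ℝ) → (Fin N → ℝ) :=
    fun y i => if h : i ∈ Sf then y ⟨i, h⟩ else 0 with hextS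
  set extT : ((i : Tf) → ℝ) → (Fin N → ℝ) :=
    fun y i => if h : i ∈ Tf then y ⟨i, h⟩ else 0 with hextT
  have hextSm : Measurable extS := by
    refine measurable_pi_lambda _ fun i => ?_
    by_cases h : i ∈ Sf
    · simp only [hextS, dif_pos h]; exact measurable_pi_apply _
    · simp only [hextS, dif_neg h]; exact measurable_const
  have hextTm : Measurable extT := by
    refine measurable_pi_lambda _ fun i => ?_
    by_cases h : i ∈ Tf
    · simp only [hextT, dif_pos h]; exact measurable_pi_apply _
    · simp only [hextT, dif_neg h]; exact measurable_const
  -- the sets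
  set QB : Set (Fin N → ℝ) :=
    {d | ∃ i ≤ j, x < psum N i d - psum N j d} ∩
      ⋂ j' ∈ Finset.range j, {d | ∃ i ≤ j', x < psum N i d - psum N j' d}ᶜ with hQB
  have hQBm : MeasurableSet QB :=
    (measurable_Qex N j x).inter
      (MeasurableSet.biInter (Set.to_countable _) fun j' _ => (measurable_Qex N j' x).compl)
  set SB : Set ((i : Sf) → ℝ) := extS ⁻¹' QB with hSB
  set SG : Set ((i : Tf) → ℝ) :=
    extT ⁻¹' {d | psum N N d - psum N j d < ε * x} with hSG
  have hSBm : MeasurableSet SB := hextSm hQBm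
  have hSGm : MeasurableSet SG := hextTm
    (measurableSet_lt ((measurable_psum N N).sub (measurable_psum N j)) measurable_const)
  -- identification of the preimages
  have hS_eq : (fun ω (i : Sf) => Vmap X N ω i) ⁻¹' SB = Bset X x N j := by
    ext ω
    have hps : ∀ m : ℕ, m ≤ j →
        psum N m (extS (fun i : Sf => Vmap X N ω i)) = X ((m : ℝ) / (N : ℝ)) ω := by
      intro m hm
      have hagree : ∀ i : Fin N, (i : ℕ) < m → extS (fun i : Sf => Vmap X N ω i) i = Vmap X N ω i := by
        intro i hi
        have hiS : i ∈ Sf := (hmemS i).mpr (lt_of_lt_of_le hi hm)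
        simp only [hextS, dif_pos hiS]
      rw [psum_congr_head N m _ (Vmap X N ω) hagree, psum_Vmap hX N m (le_trans hm hj) ω]
    simp only [Set.mem_preimage, hSB, Set.mem_preimage, hQB, Set.mem_inter_iff,
      Set.mem_setOf_eq, Set.mem_iInter, Set.mem_compl_iff, Bset, Pp, Finset.mem_range]
    constructor
    · rintro ⟨⟨i, hi, hlt⟩, hmin⟩
      refine ⟨⟨i, hi, ?_⟩, fun j' hj' => ?_⟩
      · rwa [hps i hi, hps j le_rfl] at hlt
      · intro hc
        obtain ⟨i', hi', hlt'⟩ := hc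
        exact hmin j' hj' ⟨i', hi', by
          rwa [hps i' (le_trans hi' (le_of_lt hj')), hps j' (le_of_lt hj')]⟩
    · rintro ⟨⟨i, hi, hlt⟩, hmin⟩
      refine ⟨⟨i, hi, ?_⟩, fun j' hj' => ?_⟩
      · rwa [hps i hi, hps j le_rfl]
      · intro hc
        obtain ⟨i', hi', hlt'⟩ := hc
        refine hmin j' hj' ⟨i', hi', ?_⟩
        rwa [hps i' (le_trans hi' (le_of_lt hj')), hps j' (le_of_lt hj')] at hlt'
  have hT_eq : (fun ω (i : Tf) => Vmap X N ω i) ⁻¹' SG = Gset X ε x N j := by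
    ext ω
    have hps : psum N N (extT (fun i : Tf => Vmap X N ω i))
        - psum N j (extT (fun i : Tf => Vmap X N ω i))
        = X ((N : ℝ) / (N : ℝ)) ω - X ((j : ℝ) / (N : ℝ)) ω := by
      have hagree : ∀ i : Fin N, j ≤ (i : ℕ) → extT (fun i : Tf => Vmap X N ω i) i = Vmap X N ω i := by
        intro i hi
        have hiT : i ∈ Tf := (hmemT i).mpr hi
        simp only [hextT, dif_pos hiT]
      rw [psum_congr_tail N j hj _ (Vmap X N ω) hagree, psum_Vmap hX N N le_rfl ω,
        psum_Vmap hX N j hj ω]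
    simp only [Set.mem_preimage, hSG, Set.mem_preimage, Set.mem_setOf_eq, Gset, hps]
  rw [← hS_eq, ← hT_eq]
  exact hIF.measure_inter_preimage_eq_mul SB SG hSBm hSGm

end NegInfTailAux

namespace NegInfTailAux

variable {Ω : Type*} [MeasureSpace Ω] [IsProbabilityMeasure (ℙ : Measure Ω)]

lemma scale_bound {X : ℝ → Ω → ℝ} {α : ℝ} (hX : IsLevyProcess ℙ X)
    (hss : SelfSimilar ℙ X α) (hα : 0 < α) {c : ℝ} (hc : 0 < c)
    {t : ℝ} (ht0 : 0 ≤ t) (ht1 : t ≤ 1) :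
    ℙ {ω | X 1 ω < c} ≤ ℙ {ω | X t ω < c} := by
  rcases eq_or_lt_of_le ht0 with h0 | h0
  · have huniv : {ω | X t ω < c} = Set.univ := by
      ext ω; simp [← h0, hX.zero ω, hc]
    rw [huniv, measure_univ]
    exact prob_le_one
  · have hmapeq := hss t h0
    have e1 : Measurable (fun f : ℝ → ℝ => f 1) := measurable_pi_apply 1
    have g1m : Measurable (fun ω => fun s : ℝ => X (t * s) ω) :=
      measurable_pi_lambda _ fun s => hX.meas _
    have g2m : Measurable (fun ω => fun s : ℝ => t ^ (1 / α) * X s ω) :=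
      measurable_pi_lambda _ fun s => measurable_const.mul (hX.meas s)
    have law : Measure.map (X t) (ℙ : Measure Ω)
        = Measure.map (fun ω => t ^ (1 / α) * X 1 ω) ℙ := by
      have h1 := congrArg (Measure.map (fun f : ℝ → ℝ => f 1)) hmapeq
      rw [Measure.map_map e1 g1m, Measure.map_map e1 g2m] at h1
      have c1 : ((fun f : ℝ → ℝ => f 1) ∘ (fun ω => fun s : ℝ => X (t * s) ω)) = X t := by
        funext ω; simp
      have c2 : ((fun f : ℝ → ℝ => f 1) ∘ (fun ω => fun s : ℝ => t ^ (1 / α) * X s ω))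
          = fun ω => t ^ (1 / α) * X 1 ω := rfl
      rwa [c1, c2] at h1
    set b : ℝ := t ^ (1 / α) with hb
    have hbpos : 0 < b := Real.rpow_pos_of_pos h0 _
    have hble : b ≤ 1 := Real.rpow_le_one ht0 ht1 (by positivity)
    have h2 : ℙ {ω | X t ω ∈ Set.Iio c} = ℙ {ω | b * X 1 ω ∈ Set.Iio c} := by
      rw [show {ω | X t ω ∈ Set.Iio c} = X t ⁻¹' Set.Iio c from rfl,
        show {ω | b * X 1 ω ∈ Set.Iio c} = (fun ω => b * X 1 ω) ⁻¹' Set.Iio c from rfl,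
        ← Measure.map_apply (hX.meas t) measurableSet_Iio,
        ← Measure.map_apply (by exact (measurable_const.mul (hX.meas 1) : Measurable fun ω => b * X 1 ω)) measurableSet_Iio, law]
    have h3 : {ω | X 1 ω < c} ⊆ {ω | b * X 1 ω < c} := by
      intro ω hω
      simp only [Set.mem_setOf_eq] at hω ⊢
      rcases le_or_gt (X 1 ω) 0 with hle | hpos
      · have : b * X 1 ω ≤ 0 := mul_nonpos_of_nonneg_of_nonpos hbpos.le hle
        linarith
      · have := mul_le_mul_of_nonneg_right hble hpos.le
        rw [one_mul] at this
        linarith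
    calc ℙ {ω | X 1 ω < c} ≤ ℙ {ω | b * X 1 ω < c} := measure_mono h3
      _ = ℙ {ω | X t ω < c} := h2.symm

lemma Gset_bound {X : ℝ → Ω → ℝ} {α : ℝ} (hX : IsLevyProcess ℙ X)
    (hss : SelfSimilar ℙ X α) (hα : 0 < α) {ε x : ℝ} (hεx : 0 < ε * x)
    (N : ℕ) (hN : 0 < N) (j : ℕ) (hj : j ≤ N) :
    ℙ {ω | X 1 ω < ε * x} ≤ ℙ (Gset X ε x N j) := by
  have hNR : (0 : ℝ) < (N : ℝ) := by exact_mod_cast hN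
  set s : ℝ := (j : ℝ) / (N : ℝ) with hs
  set t : ℝ := ((N - j : ℕ) : ℝ) / (N : ℝ) with ht
  have hst : s + t = (N : ℝ) / (N : ℝ) := by
    rw [hs, ht, ← add_div, Nat.cast_sub hj]
    ring_nf
  have hmap := hX.stationary s t (by positivity) (by positivity)
  have hGeq : Gset X ε x N j = (fun ω => X (s + t) ω - X s ω) ⁻¹' Set.Iio (ε * x) := by
    unfold Gset
    rw [hst]
    rfl
  have h1 : ℙ (Gset X ε x N j) = ℙ {ω | X t ω < ε * x} := by
    rw [hGeq, show {ω | X t ω < ε * x} = X t ⁻¹' Set.Iio (ε * x) from rfl,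
      ← Measure.map_apply (by exact ((hX.meas _).sub (hX.meas _) : Measurable fun ω => X (s + t) ω - X s ω)) measurableSet_Iio,
      ← Measure.map_apply (hX.meas t) measurableSet_Iio, hmap]
  rw [h1]
  refine scale_bound hX hss hα hεx (by positivity) ?_
  rw [ht, div_le_one hNR]
  exact_mod_cast Nat.sub_le N j

lemma discrete_main {X : ℝ → Ω → ℝ} {α : ℝ} (hX : IsLevyProcess ℙ X)
    (hss : SelfSimilar ℙ X α) (hα : 0 < α) {ε x : ℝ} (hε : 0 < ε) (hx : 0 < x)
    (N : ℕ) (hN : 0 < N) :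
    ℙ {ω | X 1 ω < ε * x} * ℙ (⋃ j ∈ Finset.range (N + 1), Pp X x N j)
      ≤ ℙ {ω | ∃ j ≤ N, X ((j : ℝ) / (N : ℝ)) ω < (ε - 1) * x} := by
  classical
  have hεx : 0 < ε * x := mul_pos hε hx
  set F := {ω : Ω | X 1 ω < ε * x} with hF
  -- first-passage decomposition
  have hBsub : ∀ j, Bset X x N j ⊆ Pp X x N j := fun j => Set.inter_subset_left
  have hBnotin : ∀ j j', j' < j → Bset X x N j ⊆ (Pp X x N j')ᶜ := by
    intro j j' hj'
    intro ω hω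
    have := hω.2
    simp only [Set.mem_iInter] at this
    exact this j' (Finset.mem_range.mpr hj')
  have hdisjB : ∀ a b : ℕ, a ≠ b → Disjoint (Bset X x N a) (Bset X x N b) := by
    intro a b hab
    rcases lt_or_gt_of_ne hab with h | h
    · rw [Set.disjoint_left]
      intro ω ha hb
      exact hBnotin b a h hb (hBsub a ha)
    · rw [Set.disjoint_left]
      intro ω ha hb
      exact hBnotin a b h ha (hBsub b hb)
  have hEB : ⋃ j ∈ Finset.range (N + 1), Pp X x N j
      = ⋃ j ∈ Finset.range (N + 1), Bset X x N j := by
    apply Set.Subset.antisymm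
    · intro ω hω
      simp only [Set.mem_iUnion, Finset.mem_range] at hω
      obtain ⟨j, hjN, hωj⟩ := hω
      have hex : ∃ m, ω ∈ Pp X x N m := ⟨j, hωj⟩
      have hfind : Nat.find hex ≤ j := Nat.find_min' hex hωj
      simp only [Set.mem_iUnion, Finset.mem_range]
      refine ⟨Nat.find hex, lt_of_le_of_lt hfind hjN, ?_, ?_⟩
      · exact Nat.find_spec hex
      · simp only [Set.mem_iInter]
        intro j' hj'
        exact Nat.find_min hex (Finset.mem_range.mp hj')
    · refine Set.iUnion₂_mono fun j _ => hBsub j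
  have hBmeas : ∀ j, MeasurableSet (Bset X x N j) := measurable_Bset hX x N
  have hGmeas : ∀ j, MeasurableSet (Gset X ε x N j) := measurable_Gset hX ε x N
  have hsumE : ℙ (⋃ j ∈ Finset.range (N + 1), Pp X x N j)
      = ∑ j ∈ Finset.range (N + 1), ℙ (Bset X x N j) := by
    rw [hEB]
    exact measure_biUnion_finset
      (fun a _ b _ hab => hdisjB a b hab) (fun j _ => hBmeas j)
  -- the A' event
  set A' := {ω : Ω | ∃ i ≤ N, (1 - ε) * x < X ((i : ℝ) / (N : ℝ)) ω - X ((N : ℝ) / (N : ℝ)) ω}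
    with hA'
  have hsubA' : ∀ j ∈ Finset.range (N + 1), Bset X x N j ∩ Gset X ε x N j ⊆ A' := by
    intro j hjr ω hω
    have hjN : j ≤ N := Nat.lt_succ_iff.mp (Finset.mem_range.mp hjr)
    obtain ⟨⟨i, hi, hlt⟩, -⟩ := hω.1
    have hg : X ((N : ℝ) / (N : ℝ)) ω - X ((j : ℝ) / (N : ℝ)) ω < ε * x := hω.2
    exact ⟨i, le_trans hi hjN, by linarith⟩
  have hchain : ℙ F * ℙ (⋃ j ∈ Finset.range (N + 1), Pp X x N j) ≤ ℙ A' := by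
    rw [hsumE, Finset.mul_sum]
    have step1 : ∀ j ∈ Finset.range (N + 1),
        ℙ F * ℙ (Bset X x N j) ≤ ℙ (Bset X x N j ∩ Gset X ε x N j) := by
      intro j hjr
      have hjN : j ≤ N := Nat.lt_succ_iff.mp (Finset.mem_range.mp hjr)
      rw [keyIndep hX ε x N j hjN, mul_comm]
      exact mul_le_mul_right (Gset_bound hX hss hα hεx N hN j hjN) _
    calc ∑ j ∈ Finset.range (N + 1), ℙ F * ℙ (Bset X x N j)
        ≤ ∑ j ∈ Finset.range (N + 1), ℙ (Bset X x N j ∩ Gset X ε x N j) :=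
          Finset.sum_le_sum step1
      _ = ℙ (⋃ j ∈ Finset.range (N + 1), (Bset X x N j ∩ Gset X ε x N j)) := by
          refine (measure_biUnion_finset ?_ fun j _ => (hBmeas j).inter (hGmeas j)).symm
          intro a _ b _ hab
          exact Disjoint.mono Set.inter_subset_left Set.inter_subset_left (hdisjB a b hab)
      _ ≤ ℙ A' := measure_mono (Set.iUnion₂_subset hsubA')
  -- reversal
  set SA : Set (Fin N → ℝ) := {d | ∃ m ≤ N, psum N m d < (ε - 1) * x} with hSA
  have hSAm : MeasurableSet SA := by
    rw [hSA, Set.setOf_exists]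
    refine MeasurableSet.iUnion fun m => ?_
    by_cases hm : m ≤ N
    · simp only [hm, true_and, exists_prop]
      exact measurableSet_lt (measurable_psum N m) measurable_const
    · simp [hm]
  have h1 : Vmap X N ⁻¹' SA = {ω | ∃ j ≤ N, X ((j : ℝ) / (N : ℝ)) ω < (ε - 1) * x} := by
    ext ω
    simp only [Set.mem_preimage, hSA, Set.mem_setOf_eq]
    constructor
    · rintro ⟨m, hm, hlt⟩
      exact ⟨m, hm, by rwa [psum_Vmap hX N m hm ω] at hlt⟩
    · rintro ⟨m, hm, hlt⟩
      exact ⟨m, hm, by rwa [psum_Vmap hX N m hm ω]⟩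
  have h2 : Vmap X N ⁻¹' (rev N ⁻¹' SA) = A' := by
    ext ω
    simp only [Set.mem_preimage, hSA, Set.mem_setOf_eq, hA']
    constructor
    · rintro ⟨m, hm, hlt⟩
      rw [psum_rev N m hm, psum_Vmap hX N N le_rfl ω,
        psum_Vmap hX N (N - m) (Nat.sub_le N m) ω] at hlt
      exact ⟨N - m, Nat.sub_le N m, by linarith⟩
    · rintro ⟨i, hi, hlt⟩
      refine ⟨N - i, Nat.sub_le N i, ?_⟩
      rw [psum_rev N (N - i) (Nat.sub_le N i), psum_Vmap hX N N le_rfl ω,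
        psum_Vmap hX N (N - (N - i)) (Nat.sub_le N (N - i)) ω]
      rw [Nat.sub_sub_self hi]
      linarith
  have hrev := rev_invariant hX N hSAm
  rw [h2, h1] at hrev
  calc ℙ F * ℙ (⋃ j ∈ Finset.range (N + 1), Pp X x N j) ≤ ℙ A' := hchain
    _ = ℙ {ω | ∃ j ≤ N, X ((j : ℝ) / (N : ℝ)) ω < (ε - 1) * x} := hrev

end NegInfTailAux

namespace NegInfTailAux

variable {Ω : Type*} [MeasureSpace Ω] [IsProbabilityMeasure (ℙ : Measure Ω)]

/-- dyadic grid drawdown event -/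
def Esn (X : ℝ → Ω → ℝ) (x : ℝ) (n : ℕ) : Set Ω :=
  ⋃ j ∈ Finset.range (2 ^ n + 1), Pp X x (2 ^ n) j

lemma Esn_mono (X : ℝ → Ω → ℝ) (x : ℝ) (n : ℕ) : Esn X x n ⊆ Esn X x (n + 1) := by
  intro ω hω
  simp only [Esn, Set.mem_iUnion, Finset.mem_range] at hω ⊢
  obtain ⟨j, hj, i, hi, hlt⟩ := hω
  have hcast : ∀ m : ℕ, ((2 * m : ℕ) : ℝ) / ((2 ^ (n + 1) : ℕ) : ℝ)
      = ((m : ℕ) : ℝ) / ((2 ^ n : ℕ) : ℝ) := by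
    intro m
    push_cast
    rw [pow_succ, mul_comm ((2:ℝ)^n) 2]
    rw [mul_div_mul_left _ _ (by norm_num : (2:ℝ) ≠ 0)]
  exact ⟨2 * j, by omega, 2 * i, by omega, by rwa [hcast i, hcast j]⟩

lemma measurable_Esn {X : ℝ → Ω → ℝ} (hX : IsLevyProcess ℙ X) (x : ℝ) (n : ℕ) :
    MeasurableSet (Esn X x n) :=
  MeasurableSet.biUnion (Set.to_countable _) fun j _ => measurable_Pp hX x _ j

lemma E_subset_iUnion {X : ℝ → Ω → ℝ} (hX : IsLevyProcess ℙ X) {x : ℝ} (hx : 0 < x) :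
    {ω | ∃ u v : ℝ, 0 ≤ u ∧ u ≤ v ∧ v ≤ 1 ∧ x < X u ω - X v ω} ⊆ ⋃ n, Esn X x n := by
  rintro ω ⟨u, v, hu0, huv, hv1, hlt⟩
  set δ : ℝ := (X u ω - X v ω - x) / 2 with hδdef
  have hδ : 0 < δ := by simp only [hδdef]; linarith
  have hcu := (hX.rightCont ω u)
  have hcv := (hX.rightCont ω v)
  rw [ContinuousWithinAt, Metric.tendsto_nhdsWithin_nhds] at hcu hcv
  obtain ⟨η₁, hη₁, hcu⟩ := hcu δ hδ
  obtain ⟨η₂, hη₂, hcv⟩ := hcv δ hδ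
  obtain ⟨n, hn⟩ : ∃ n : ℕ, ((1:ℝ)/2) ^ n < min η₁ η₂ :=
    exists_pow_lt_of_lt_one (lt_min hη₁ hη₂) (by norm_num)
  set T : ℝ := (2 : ℝ) ^ n with hTdef
  have hT : (0:ℝ) < T := by positivity
  have hTinv : 1 / T < min η₁ η₂ := by
    rwa [hTdef, ← one_div_pow]
  set k : ℕ := ⌈u * T⌉₊ with hk
  set m : ℕ := ⌈v * T⌉₊ with hm
  have hk1 : u * T ≤ (k : ℝ) := Nat.le_ceil _
  have hk2 : (k : ℝ) < u * T + 1 := Nat.ceil_lt_add_one (by positivity)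
  have hm1 : v * T ≤ (m : ℝ) := Nat.le_ceil _
  have hv0 : 0 ≤ v := le_trans hu0 huv
  have hm2 : (m : ℝ) < v * T + 1 := Nat.ceil_lt_add_one (by positivity)
  have hkm : k ≤ m := Nat.ceil_le_ceil (mul_le_mul_of_nonneg_right huv hT.le)
  have hcastT : ((2 ^ n : ℕ) : ℝ) = T := by rw [hTdef]; push_cast; ring
  have hm3 : m ≤ 2 ^ n := by
    rw [hm, Nat.ceil_le, hcastT]
    calc v * T ≤ 1 * T := mul_le_mul_of_nonneg_right hv1 hT.le
      _ = T := one_mul T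
  set u' : ℝ := (k : ℝ) / T with hu'
  set v' : ℝ := (m : ℝ) / T with hv'
  have hu'1 : u ≤ u' := by rw [hu', le_div_iff₀ hT]; exact hk1
  have hv'1 : v ≤ v' := by rw [hv', le_div_iff₀ hT]; exact hm1
  have hu'2 : u' < u + 1 / T := by
    rw [hu', div_lt_iff₀ hT]
    have : (u + 1 / T) * T = u * T + 1 := by field_simp
    linarith [this]
  have hv'2 : v' < v + 1 / T := by
    rw [hv', div_lt_iff₀ hT]
    have : (v + 1 / T) * T = v * T + 1 := by field_simp
    linarith [this]
  have hdu : dist u' u < η₁ := by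
    rw [Real.dist_eq, abs_of_nonneg (by linarith)]
    have := lt_min_iff.mp hTinv
    linarith [this.1]
  have hdv : dist v' v < η₂ := by
    rw [Real.dist_eq, abs_of_nonneg (by linarith)]
    have := lt_min_iff.mp hTinv
    linarith [this.2]
  have hXu := hcu (Set.mem_Ici.mpr hu'1) hdu
  have hXv := hcv (Set.mem_Ici.mpr hv'1) hdv
  rw [Real.dist_eq] at hXu hXv
  have hXu' := abs_lt.mp hXu
  have hXv' := abs_lt.mp hXv
  refine Set.mem_iUnion.mpr ⟨n, ?_⟩
  simp only [Esn, Set.mem_iUnion, Finset.mem_range]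
  refine ⟨m, by omega, k, hkm, ?_⟩
  rw [hcastT]
  show x < X u' ω - X v' ω
  simp only [hδdef] at hXu' hXv'
  linarith [hXu'.1, hXu'.2, hXv'.1, hXv'.2]

end NegInfTailAux


open NegInfTailAux in
/-- For an α-stable Lévy process and any `ε > 0`, `x > 0`:
`P(-I₁ > (1-ε)x) ≥ P(-X₁ > -εx) ⬝ P(M₁⁻ > x)`. -/
theorem neg_inf_tail_ge {Ω : Type*} [MeasureSpace Ω]
    [IsProbabilityMeasure (ℙ : Measure Ω)] (X : ℝ → Ω → ℝ) (α : ℝ)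
    (hα : 0 < α ∧ α ≤ 2) (hX : IsLevyProcess ℙ X) (hss : SelfSimilar ℙ X α)
    (ε x : ℝ) (hε : 0 < ε) (hx : 0 < x) :
    ℙ {ω | ∃ v : ℝ, 0 ≤ v ∧ v ≤ 1 ∧ (1 - ε) * x < -X v ω} ≥
      ℙ {ω | -(ε * x) < -X 1 ω} *
        ℙ {ω | ∃ u v : ℝ, 0 ≤ u ∧ u ≤ v ∧ v ≤ 1 ∧ x < X u ω - X v ω} := by
  obtain ⟨hα0, -⟩ := hα
  have hFeq : {ω : Ω | -(ε * x) < -X 1 ω} = {ω | X 1 ω < ε * x} := by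
    ext ω; simp [neg_lt_neg_iff]
  have key : ∀ n : ℕ, ℙ {ω | X 1 ω < ε * x} * ℙ (Esn X x n)
      ≤ ℙ {ω : Ω | ∃ v : ℝ, 0 ≤ v ∧ v ≤ 1 ∧ (1 - ε) * x < -X v ω} := by
    intro n
    have hNpos : 0 < 2 ^ n := Nat.pow_pos (by norm_num)
    have h1 := discrete_main hX hss hα0 hε hx (2 ^ n) hNpos
    have hcast : (0:ℝ) < ((2 ^ n : ℕ) : ℝ) := by exact_mod_cast hNpos
    refine le_trans h1 (measure_mono ?_)
    rintro ω ⟨j, hj, hlt⟩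
    refine ⟨(j : ℝ) / ((2 ^ n : ℕ) : ℝ), by positivity, ?_, by linarith⟩
    rw [div_le_one hcast]
    exact_mod_cast hj
  have hmono : Monotone (Esn X x) := monotone_nat_of_le_succ (Esn_mono X x)
  have hsup : ℙ (⋃ n, Esn X x n) = ⨆ n, ℙ (Esn X x n) :=
    Directed.measure_iUnion hmono.directed_le
  calc ℙ {ω : Ω | -(ε * x) < -X 1 ω} *
        ℙ {ω | ∃ u v : ℝ, 0 ≤ u ∧ u ≤ v ∧ v ≤ 1 ∧ x < X u ω - X v ω}
      = ℙ {ω : Ω | X 1 ω < ε * x} *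
        ℙ {ω | ∃ u v : ℝ, 0 ≤ u ∧ u ≤ v ∧ v ≤ 1 ∧ x < X u ω - X v ω} := by rw [hFeq]
    _ ≤ ℙ {ω : Ω | X 1 ω < ε * x} * ⨆ n, ℙ (Esn X x n) := by
        refine mul_le_mul_right ?_ _
        rw [← hsup]
        exact measure_mono (E_subset_iUnion hX hx)
    _ = ⨆ n, ℙ {ω : Ω | X 1 ω < ε * x} * ℙ (Esn X x n) := ENNReal.mul_iSup _ _
    _ ≤ ℙ {ω : Ω | ∃ v : ℝ, 0 ≤ v ∧ v ≤ 1 ∧ (1 - ε) * x < -X v ω} := iSup_le key
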